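/- Let d ≥ 1, r > 0, x ∈ ℝ^d, and f ∈ L¹_loc(ℝ^d). Then ∫_{S^{d-1}} ∫₀^r |f(x + sσ)| ds dσ ≤ C_d · r · M(f)(x), where C_d is a positive constant depending only on d. -/

import Mathlib

open MeasureTheory Filter Metric Set
open scoped ENNReal Topology

noncomputable section

/-- The Hardy–Littlewood maximal function
`M(f)(x) = sup_{s>0} (1/|B(x,s)|) ∫_{B(x,s)} |f|`. -/
def maximalFn (d : ℕ) (f : EuclideanSpace ℝ (Fin d) → ℝ)
    (x : EuclideanSpace ℝ (Fin d)) : ℝ≥0∞ :=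
  ⨆ (s : ℝ) (_ : 0 < s),
    (volume (ball x s))⁻¹ * ∫⁻ y in ball x s, ENNReal.ofReal |f y|

variable {d : ℕ}

local notation "E" => EuclideanSpace ℝ (Fin d)

lemma nontriv (hd : 1 ≤ d) : Nontrivial (EuclideanSpace ℝ (Fin d)) := by
  have : Nonempty (Fin d) := Fin.pos_iff_nonempty.mp hd
  infer_instance

lemma polar (hd : 1 ≤ d) (g : EuclideanSpace ℝ (Fin d) → ℝ≥0∞) (hg : Measurable g) :
    ∫⁻ σ : sphere (0 : E) 1,
      (∫⁻ s in Ioi (0:ℝ), ENNReal.ofReal (s ^ (d-1)) * g (s • (σ : E)))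
      ∂(volume : Measure E).toSphere = ∫⁻ y, g y := by
  haveI := nontriv hd
  have mp := (volume : Measure E).measurePreserving_homeomorphUnitSphereProd
  set e := (homeomorphUnitSphereProd E).toMeasurableEquiv with he
  have hdim : Module.finrank ℝ (EuclideanSpace ℝ (Fin d)) = d := finrank_euclideanSpace_fin
  have key : ∫⁻ p : (sphere (0:E) 1 × Ioi (0:ℝ)), g ((homeomorphUnitSphereProd E).symm p : E)
      ∂(((volume : Measure E).toSphere).prod (Measure.volumeIoiPow (Module.finrank ℝ E - 1)))
      = ∫⁻ y, g y := by
    rw [mp.lintegral_map_equiv (fun p => g ((homeomorphUnitSphereProd E).symm p : E)) e]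
    have : ∀ x : ({0}ᶜ : Set E), g ((homeomorphUnitSphereProd E).symm (e x) : E) = g x := by
      intro x
      congr 1
      exact congrArg _ ((homeomorphUnitSphereProd E).symm_apply_apply x)
    simp_rw [this]
    rw [lintegral_subtype_comap (measurableSet_singleton (0:E)).compl,
      restrict_compl_singleton]
  have hmeas : Measurable (fun p : (sphere (0:E) 1 × Ioi (0:ℝ)) =>
      g ((homeomorphUnitSphereProd E).symm p : E)) :=
    hg.comp (continuous_subtype_val.comp (homeomorphUnitSphereProd E).symm.continuous).measurable
  rw [lintegral_prod _ hmeas.aemeasurable] at key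
  rw [← key]
  refine lintegral_congr fun σ => ?_
  have h1 : (fun y : Ioi (0:ℝ) => g ((homeomorphUnitSphereProd E).symm (σ, y) : E))
      = fun y : Ioi (0:ℝ) => g ((y : ℝ) • (σ : E)) := by
    funext y; rw [homeomorphUnitSphereProd_symm_apply_coe]
  rw [h1, Measure.volumeIoiPow, lintegral_withDensity_eq_lintegral_mul _
    ((measurable_subtype_coe.pow_const _).ennreal_ofReal)
    (show Measurable fun y : Ioi (0:ℝ) => g ((y : ℝ) • (σ : E)) from hg.comp (by fun_prop))]
  have h2 : ((fun r : Ioi (0:ℝ) => ENNReal.ofReal ((r:ℝ) ^ (Module.finrank ℝ E - 1))) *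
      fun y : Ioi (0:ℝ) => g ((y : ℝ) • (σ : E)))
      = fun y : Ioi (0:ℝ) =>
        (fun s : ℝ => ENNReal.ofReal (s ^ (d-1)) * g (s • (σ : E))) (y : ℝ) := by
    funext y; simp [hdim]
  rw [h2, lintegral_subtype_comap measurableSet_Ioi]

lemma translateE (h : EuclideanSpace ℝ (Fin d) → ℝ≥0∞) (x : E) (t : ℝ) :
    ∫⁻ y in ball (0:E) t, h (x + y) = ∫⁻ z in ball x t, h z := by
  rw [← lintegral_indicator measurableSet_ball, ← lintegral_indicator measurableSet_ball]
  have hmp : Measure.map (fun y : E => x + y) volume = volume :=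
    (measurePreserving_add_left (volume : Measure E) x).map_eq
  calc ∫⁻ y, (ball (0:E) t).indicator (fun y => h (x + y)) y ∂volume
      = ∫⁻ y, (ball x t).indicator h (x + y) ∂volume := by
        refine lintegral_congr fun y => ?_
        by_cases hy : y ∈ ball (0:E) t
        · rw [indicator_of_mem hy, indicator_of_mem (by simpa [dist_eq_norm] using hy)]
        · rw [indicator_of_notMem hy, indicator_of_notMem (by simpa [dist_eq_norm] using hy)]
    _ = ∫⁻ z, (ball x t).indicator h z
          ∂(Measure.map (⇑(MeasurableEquiv.addLeft x)) volume) := by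
        rw [lintegral_map_equiv]; rfl
    _ = ∫⁻ z, (ball x t).indicator h z ∂volume := by
        rw [show Measure.map (⇑(MeasurableEquiv.addLeft x)) (volume : Measure E) = volume from
          (measurePreserving_add_left (volume : Measure E) x).map_eq]

lemma ball_polar (hd : 1 ≤ d) (g : EuclideanSpace ℝ (Fin d) → ℝ≥0∞) (hg : Measurable g)
    (t : ℝ) :
    ∫⁻ σ : sphere (0 : E) 1,
      (∫⁻ s in Ioc (0:ℝ) t, ENNReal.ofReal (s ^ (d-1)) * g (s • (σ : E)))
      ∂(volume : Measure E).toSphere = ∫⁻ y in ball (0:E) t, g y := by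
  rw [← lintegral_indicator measurableSet_ball,
    ← polar hd ((ball (0:E) t).indicator g) (hg.indicator measurableSet_ball)]
  refine lintegral_congr fun σ => ?_
  have hσ : ‖(σ : E)‖ = 1 := mem_sphere_zero_iff_norm.mp σ.2
  have h1 : ∫⁻ s in Ioi (0:ℝ),
      ENNReal.ofReal (s ^ (d-1)) * (ball (0:E) t).indicator g (s • (σ : E))
      = ∫⁻ s in Ioi (0:ℝ),
        (Iio t).indicator (fun s => ENNReal.ofReal (s ^ (d-1)) * g (s • (σ : E))) s := by
    refine setLIntegral_congr_fun measurableSet_Ioi (fun s hs => ?_)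
    have hmem : s • (σ : E) ∈ ball (0:E) t ↔ s < t := by
      rw [mem_ball_zero_iff, norm_smul, hσ, mul_one, Real.norm_eq_abs,
        abs_of_pos (mem_Ioi.mp hs)]
    by_cases hst : s < t
    · rw [indicator_of_mem (hmem.mpr hst), indicator_of_mem (mem_Iio.mpr hst)]
    · rw [indicator_of_notMem (fun h => hst (hmem.mp h)),
        indicator_of_notMem (fun h => hst (mem_Iio.mp h)), mul_zero]
  rw [h1, setLIntegral_indicator measurableSet_Iio,
    show Iio t ∩ Ioi (0:ℝ) = Ioo 0 t by rw [inter_comm]; rfl,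
    ← Measure.restrict_congr_set Ioo_ae_eq_Ioc]


lemma ballx (hd : 1 ≤ d) (f : EuclideanSpace ℝ (Fin d) → ℝ) (hf : Measurable f)
    (x : E) (t : ℝ) :
    ∫⁻ σ : sphere (0 : E) 1,
      (∫⁻ s in Ioc (0:ℝ) t, ENNReal.ofReal (s ^ (d-1)) * ENNReal.ofReal |f (x + s • (σ : E))|)
      ∂(volume : Measure E).toSphere = ∫⁻ z in ball x t, ENNReal.ofReal |f z| := by
  have hg : Measurable fun y : E => ENNReal.ofReal |f (x + y)| :=
    ((hf.comp (measurable_const.add measurable_id)).abs).ennreal_ofReal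
  have := ball_polar hd (fun y => ENNReal.ofReal |f (x + y)|) hg t
  rw [this, translateE (fun z => ENNReal.ofReal |f z|) x t]

lemma lint_ball_le (f : EuclideanSpace ℝ (Fin d) → ℝ) (x : E) (t : ℝ) (ht : 0 < t) :
    ∫⁻ z in ball x t, ENNReal.ofReal |f z| ≤ volume (ball x t) * maximalFn d f x := by
  have h0 : volume (ball x t) ≠ 0 := (measure_ball_pos _ _ ht).ne'
  have htop : volume (ball x t) ≠ ⊤ := measure_ball_lt_top.ne
  have hM : (volume (ball x t))⁻¹ * ∫⁻ z in ball x t, ENNReal.ofReal |f z|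
      ≤ maximalFn d f x := by
    refine le_trans ?_ (le_iSup (fun s => ⨆ (_ : 0 < s),
      (volume (ball x s))⁻¹ * ∫⁻ y in ball x s, ENNReal.ofReal |f y|) t)
    exact le_iSup (fun _ : 0 < t =>
      (volume (ball x t))⁻¹ * ∫⁻ y in ball x t, ENNReal.ofReal |f y|) ht
  calc ∫⁻ z in ball x t, ENNReal.ofReal |f z|
      = (volume (ball x t) * (volume (ball x t))⁻¹) * ∫⁻ z in ball x t, ENNReal.ofReal |f z| := by
        rw [ENNReal.mul_inv_cancel h0 htop, one_mul]
    _ = volume (ball x t) * ((volume (ball x t))⁻¹ * ∫⁻ z in ball x t, ENNReal.ofReal |f z|) := by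
        rw [mul_assoc]
    _ ≤ _ := mul_le_mul_right hM _

lemma cover (r : ℝ) (hr : 0 < r) :
    Ioc (0:ℝ) r = ⋃ k : ℕ, Ioc (r / 2^(k+1)) (r / 2^k) := by
  ext s
  simp only [mem_iUnion, mem_Ioc]
  constructor
  · rintro ⟨hs0, hsr⟩
    have hex : ∃ k : ℕ, r / 2^(k+1) < s := by
      obtain ⟨k, hk⟩ := exists_pow_lt_of_lt_one (show (0:ℝ) < s / r by positivity)
        (show (1:ℝ)/2 < 1 by norm_num)
      refine ⟨k, ?_⟩
      have h1 : (1/2:ℝ)^k * r < s := (lt_div_iff₀ hr).mp hk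
      have h2 : r / 2^(k+1) < r / 2^k :=
        div_lt_div_of_pos_left hr (by positivity)
          (by exact pow_lt_pow_right₀ (by norm_num) (by omega))
      have h3 : r / 2^k = (1/2:ℝ)^k * r := by
        rw [div_eq_mul_inv, mul_comm, ← inv_pow]; norm_num
      linarith
    refine ⟨Nat.find hex, Nat.find_spec hex, ?_⟩
    rcases Nat.eq_zero_or_pos (Nat.find hex) with h0 | hpos
    · rw [h0]; simpa using hsr
    · obtain ⟨m, hm⟩ := Nat.exists_eq_succ_of_ne_zero hpos.ne'
      have hmin := Nat.find_min hex (m := m) (by omega)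
      push_neg at hmin
      rw [hm]
      exact hmin
  · rintro ⟨k, hk1, hk2⟩
    exact ⟨lt_trans (by positivity) hk1,
      le_trans hk2 (div_le_self hr.le (one_le_pow₀ (by norm_num)))⟩

lemma main_meas (hd : 1 ≤ d) (r : ℝ) (hr : 0 < r) (x : E)
    (f : EuclideanSpace ℝ (Fin d) → ℝ) (hf : Measurable f) :
    ∫⁻ σ : sphere (0 : E) 1,
      (∫⁻ s in Ioc (0:ℝ) r, ENNReal.ofReal |f (x + s • (σ : E))|)
      ∂(volume : Measure E).toSphere
    ≤ ENNReal.ofReal ((2^d * (volume (ball (0:E) 1)).toReal) * r) * maximalFn d f x := by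
  haveI := nontriv hd
  have hdim : Module.finrank ℝ (EuclideanSpace ℝ (Fin d)) = d := finrank_euclideanSpace_fin
  set V1 := volume (ball (0:E) 1) with hV1
  have hV1top : V1 ≠ ⊤ := measure_ball_lt_top.ne
  set M := maximalFn d f x with hM
  set A : ℕ → Set ℝ := fun k => Ioc (r/2^(k+1)) (r/2^k) with hA
  have hAmeas : ∀ k, MeasurableSet (A k) := fun k => measurableSet_Ioc
  have hdisj : Pairwise (Function.onFun Disjoint A) := by
    have key : ∀ j k : ℕ, j < k → Disjoint (A j) (A k) := by
      intro j k hjk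
      refine Set.Ioc_disjoint_Ioc.mpr ?_
      refine le_trans (min_le_right _ _) (le_trans ?_ (le_max_left _ _))
      gcongr
      all_goals first | exact hr.le | omega | norm_num
    intro j k hjk
    rcases lt_or_gt_of_ne hjk with h | h
    · exact key j k h
    · exact (key k j h).symm
  have hjoint : ∀ (S : Set ℝ), Measurable fun σ : sphere (0:E) 1 =>
      ∫⁻ s in S, ENNReal.ofReal |f (x + s • (σ : E))| := by
    intro S
    have hj : Measurable fun p : sphere (0:E) 1 × ℝ =>
        ENNReal.ofReal |f (x + p.2 • (p.1 : E))| :=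
      ((hf.comp (by fun_prop)).abs).ennreal_ofReal
    exact hj.lintegral_prod_right'
  have termbound : ∀ k : ℕ,
      (∫⁻ σ : sphere (0 : E) 1, (∫⁻ s in A k, ENNReal.ofReal |f (x + s • (σ : E))|)
        ∂(volume : Measure E).toSphere)
      ≤ ENNReal.ofReal (2^d * (r / 2^(k+1))) * (V1 * M) := by
    intro k
    set a := r / 2^(k+1) with ha'
    set t := r / 2^k with ht'
    have ha : 0 < a := by positivity
    have ht : 0 < t := by positivity
    have hta : t = 2 * a := by rw [ha', ht', pow_succ]; ring
    set c := ENNReal.ofReal (a^(d-1)) with hc'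
    have hc0 : c ≠ 0 := by
      simp only [hc', ne_eq, ENNReal.ofReal_eq_zero, not_le]
      positivity
    have hctop : c ≠ ⊤ := ENNReal.ofReal_ne_top
    have step1 : ∀ σ : sphere (0:E) 1, (∫⁻ s in A k, ENNReal.ofReal |f (x + s • (σ : E))|)
        ≤ c⁻¹ * ∫⁻ s in Ioc (0:ℝ) t, ENNReal.ofReal (s^(d-1)) *
            ENNReal.ofReal |f (x + s • (σ : E))| := by
      intro σ
      calc ∫⁻ s in A k, ENNReal.ofReal |f (x + s • (σ : E))|
          ≤ ∫⁻ s in A k, c⁻¹ * (ENNReal.ofReal (s^(d-1)) *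
              ENNReal.ofReal |f (x + s • (σ : E))|) := by
            refine setLIntegral_mono (by fun_prop) fun s hs => ?_
            have hcs : c ≤ ENNReal.ofReal (s^(d-1)) :=
              ENNReal.ofReal_le_ofReal (pow_le_pow_left₀ ha.le hs.1.le _)
            calc ENNReal.ofReal |f (x + s • (σ : E))|
                = c⁻¹ * (c * ENNReal.ofReal |f (x + s • (σ : E))|) := by
                  rw [← mul_assoc, ENNReal.inv_mul_cancel hc0 hctop, one_mul]
              _ ≤ _ := mul_le_mul_right (mul_le_mul_left hcs _) _
        _ = c⁻¹ * ∫⁻ s in A k, ENNReal.ofReal (s^(d-1)) *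
              ENNReal.ofReal |f (x + s • (σ : E))| :=
            lintegral_const_mul' _ _ (by simp [hc0])
        _ ≤ _ := by
            refine mul_le_mul_right (lintegral_mono_set ?_) _
            exact Ioc_subset_Ioc_left ha.le
    calc ∫⁻ σ : sphere (0 : E) 1, (∫⁻ s in A k, ENNReal.ofReal |f (x + s • (σ : E))|)
          ∂(volume : Measure E).toSphere
        ≤ ∫⁻ σ : sphere (0 : E) 1, c⁻¹ * (∫⁻ s in Ioc (0:ℝ) t,
            ENNReal.ofReal (s^(d-1)) * ENNReal.ofReal |f (x + s • (σ : E))|)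
            ∂(volume : Measure E).toSphere := lintegral_mono step1
      _ = c⁻¹ * ∫⁻ σ : sphere (0 : E) 1, (∫⁻ s in Ioc (0:ℝ) t,
            ENNReal.ofReal (s^(d-1)) * ENNReal.ofReal |f (x + s • (σ : E))|)
            ∂(volume : Measure E).toSphere :=
          lintegral_const_mul' _ _ (by simp [hc0])
      _ = c⁻¹ * ∫⁻ z in ball x t, ENNReal.ofReal |f z| := by rw [ballx hd f hf x t]
      _ ≤ c⁻¹ * (volume (ball x t) * M) := mul_le_mul_right (lint_ball_le f x t ht) _
      _ = c⁻¹ * ((ENNReal.ofReal (t^d) * V1) * M) := by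
          rw [Measure.addHaar_ball volume x ht.le, hdim]
      _ = ENNReal.ofReal (2^d * a) * (V1 * M) := by
          have hreal : t^d = (2^d * a) * a^(d-1) := by
            have h1 : d - 1 + 1 = d := Nat.succ_pred_eq_of_pos hd
            have h2 : a^(d-1) * a = a^d := by rw [← pow_succ, h1]
            rw [hta, mul_pow, ← h2]
            ring
          rw [hreal, ENNReal.ofReal_mul (by positivity), ← hc']
          rw [show c⁻¹ * ((ENNReal.ofReal (2^d*a) * c * V1) * M)
              = (c⁻¹ * c) * (ENNReal.ofReal (2^d*a) * (V1 * M)) by ring,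
            ENNReal.inv_mul_cancel hc0 hctop, one_mul]
  calc ∫⁻ σ : sphere (0 : E) 1,
        (∫⁻ s in Ioc (0:ℝ) r, ENNReal.ofReal |f (x + s • (σ : E))|)
        ∂(volume : Measure E).toSphere
      = ∫⁻ σ : sphere (0 : E) 1, ∑' k, (∫⁻ s in A k, ENNReal.ofReal |f (x + s • (σ : E))|)
        ∂(volume : Measure E).toSphere := by
        refine lintegral_congr fun σ => ?_
        rw [cover r hr, lintegral_iUnion hAmeas hdisj]
    _ = ∑' k, ∫⁻ σ : sphere (0 : E) 1, (∫⁻ s in A k, ENNReal.ofReal |f (x + s • (σ : E))|)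
        ∂(volume : Measure E).toSphere :=
        lintegral_tsum fun k => (hjoint (A k)).aemeasurable
    _ ≤ ∑' k, ENNReal.ofReal (2^d * (r / 2^(k+1))) * (V1 * M) :=
        ENNReal.tsum_le_tsum termbound
    _ = (∑' k : ℕ, ENNReal.ofReal (2^d * (r / 2^(k+1)))) * (V1 * M) :=
        ENNReal.tsum_mul_right
    _ ≤ ENNReal.ofReal ((2^d * V1.toReal) * r) * M := by
        have h1 : ∀ k : ℕ, (2:ℝ)^d * (r / 2^(k+1)) = (2^(d-1) * r) * (1/2)^k := by
          intro k
          have h2 : d - 1 + 1 = d := Nat.succ_pred_eq_of_pos hd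
          have h2b : (2:ℝ)^d = 2 * 2^(d-1) := by
            conv_lhs => rw [← h2]
            rw [pow_succ]; ring
          rw [h2b, pow_succ]
          field_simp
          ring_nf
          rw [← mul_pow]; norm_num
        have h3 : (∑' k : ℕ, ENNReal.ofReal (2^d * (r / 2^(k+1))))
            = ENNReal.ofReal (2^(d-1) * r) * 2 := by
          simp_rw [h1]
          have h4 : ∀ k : ℕ, ENNReal.ofReal ((2^(d-1) * r) * (1/2)^k)
              = ENNReal.ofReal (2^(d-1) * r) * (ENNReal.ofReal (1/2))^k := by
            intro k
            rw [ENNReal.ofReal_mul (by positivity), ENNReal.ofReal_pow (by norm_num)]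
          simp_rw [h4]
          rw [ENNReal.tsum_mul_left, ENNReal.tsum_geometric]
          congr 1
          have h5 : ENNReal.ofReal (1/2 : ℝ) = 2⁻¹ := by
            rw [one_div, ENNReal.ofReal_inv_of_pos two_pos]
            norm_num
          rw [h5, ENNReal.one_sub_inv_two, inv_inv]
        rw [h3]
        have h6 : ENNReal.ofReal (2^(d-1) * r) * 2 * (V1 * M)
            = ENNReal.ofReal ((2^d * V1.toReal) * r) * M := by
          have h2 : d - 1 + 1 = d := Nat.succ_pred_eq_of_pos hd
          have h2b : (2:ℝ)^d = 2 * 2^(d-1) := by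
            conv_lhs => rw [← h2]
            rw [pow_succ]; ring
          rw [show ((2:ℝ)^d * V1.toReal) * r = (2^(d-1) * r) * (2 * V1.toReal) by
              rw [h2b]; ring,
            ENNReal.ofReal_mul (mul_nonneg (by positivity) hr.le),
            ENNReal.ofReal_mul (by norm_num : (0:ℝ) ≤ 2),
            ENNReal.ofReal_toReal hV1top, ENNReal.ofReal_ofNat]
          ring
        rw [h6]

lemma reduce (hd : 1 ≤ d) (r : ℝ) (x : E) (f g : EuclideanSpace ℝ (Fin d) → ℝ)
    (hg : Measurable g) (hfg : f =ᵐ[volume] g) :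
    ∫⁻ σ : sphere (0:E) 1, (∫⁻ s in Ioc (0:ℝ) r, ENNReal.ofReal |f (x + s • (σ:E))|)
      ∂(volume : Measure E).toSphere
    = ∫⁻ σ : sphere (0:E) 1, (∫⁻ s in Ioc (0:ℝ) r, ENNReal.ofReal |g (x + s • (σ:E))|)
      ∂(volume : Measure E).toSphere := by
  set N := toMeasurable volume {y | f y ≠ g y} with hN
  have hNmeas : MeasurableSet N := measurableSet_toMeasurable _ _
  have hNnull : volume N = 0 := by
    rw [hN, measure_toMeasurable]
    exact ae_iff.mp hfg
  set h : E → ℝ≥0∞ := fun y => N.indicator (fun _ => (1:ℝ≥0∞)) y with hh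
  have hhmeas : Measurable h := measurable_one.indicator hNmeas
  have hzero : ∫⁻ σ : sphere (0:E) 1, (∫⁻ s in Ioc (0:ℝ) r,
      ENNReal.ofReal (s^(d-1)) * h (x + s • (σ:E))) ∂(volume : Measure E).toSphere = 0 := by
    have hcomp : Measurable fun y : E => h (x + y) :=
      hhmeas.comp (measurable_const.add measurable_id)
    rw [ball_polar hd (fun y => h (x + y)) hcomp r, translateE h x r]
    refine le_antisymm ?_ zero_le
    calc ∫⁻ z in ball x r, h z ≤ ∫⁻ z, h z := setLIntegral_le_lintegral _ _
      _ = volume N := by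
          simp only [hh]
          rw [show (fun y : E => N.indicator (fun _ => (1:ℝ≥0∞)) y)
            = N.indicator (1 : E → ℝ≥0∞) from rfl]
          exact lintegral_indicator_one hNmeas
      _ = 0 := hNnull
  have hmeasσ : Measurable fun σ : sphere (0:E) 1 => ∫⁻ s in Ioc (0:ℝ) r,
      ENNReal.ofReal (s^(d-1)) * h (x + s • (σ:E)) := by
    have hj : Measurable fun p : sphere (0:E) 1 × ℝ =>
        ENNReal.ofReal (p.2^(d-1)) * h (x + p.2 • (p.1:E)) :=
      ((measurable_snd.pow_const _).ennreal_ofReal).mul (hhmeas.comp (by fun_prop))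
    exact hj.lintegral_prod_right'
  have hae := (lintegral_eq_zero_iff hmeasσ).mp hzero
  refine lintegral_congr_ae ?_
  filter_upwards [hae] with σ hσ
  have hinner : Measurable fun s : ℝ => ENNReal.ofReal (s^(d-1)) * h (x + s • (σ:E)) :=
    ((measurable_id.pow_const _).ennreal_ofReal).mul (hhmeas.comp (by fun_prop))
  have hae2 := (lintegral_eq_zero_iff hinner).mp hσ
  refine lintegral_congr_ae ?_
  filter_upwards [hae2, ae_restrict_mem measurableSet_Ioc] with s hs1 hs2
  have hs0 : (0:ℝ) < s := hs2.1
  have hne : ENNReal.ofReal (s^(d-1)) ≠ 0 := by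
    simp only [ne_eq, ENNReal.ofReal_eq_zero, not_le]
    positivity
  have hzero2 : h (x + s • (σ:E)) = 0 := by
    rcases mul_eq_zero.mp hs1 with h' | h'
    · exact absurd h' hne
    · exact h'
  have hxs : x + s • (σ:E) ∉ N := by
    intro hmem
    rw [hh] at hzero2
    simp [indicator_of_mem hmem] at hzero2
  have heq : f (x + s • (σ:E)) = g (x + s • (σ:E)) := by
    by_contra hne2
    exact hxs (subset_toMeasurable _ _ hne2)
  rw [heq]

lemma maximal_congr (f g : EuclideanSpace ℝ (Fin d) → ℝ) (x : E)
    (hfg : f =ᵐ[volume] g) : maximalFn d f x = maximalFn d g x := by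
  unfold maximalFn
  refine iSup_congr fun s => iSup_congr fun _ => ?_
  congr 1
  refine lintegral_congr_ae ?_
  filter_upwards [ae_restrict_of_ae hfg] with y hy
  rw [hy]


/-- `∫_{S^{d-1}} ∫₀^r |f(x + sσ)| ds dσ ≤ C_d r M(f)(x)`. -/
theorem statement6 (d : ℕ) (hd : 1 ≤ d) :
    ∃ C : ℝ, 0 < C ∧
      ∀ (r : ℝ), 0 < r → ∀ (x : EuclideanSpace ℝ (Fin d))
        (f : EuclideanSpace ℝ (Fin d) → ℝ), LocallyIntegrable f volume →
        (∫⁻ σ : Metric.sphere (0 : EuclideanSpace ℝ (Fin d)) 1,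
            (∫⁻ s in Ioc (0 : ℝ) r,
              ENNReal.ofReal |f (x + s • (σ : EuclideanSpace ℝ (Fin d)))|)
            ∂(volume : Measure (EuclideanSpace ℝ (Fin d))).toSphere)
          ≤ ENNReal.ofReal (C * r) * maximalFn d f x := by
  refine ⟨2^d * (volume (ball (0 : EuclideanSpace ℝ (Fin d)) 1)).toReal, ?_, ?_⟩
  · haveI := nontriv hd
    have h1 : (0:ℝ) < (volume (ball (0 : EuclideanSpace ℝ (Fin d)) 1)).toReal :=
      ENNReal.toReal_pos (measure_ball_pos volume 0 one_pos).ne' measure_ball_lt_top.ne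
    positivity
  · intro r hr x f hf
    have hsm := hf.aestronglyMeasurable
    set g := hsm.mk f with hg'
    have hgm : Measurable g := hsm.stronglyMeasurable_mk.measurable
    have hfg : f =ᵐ[volume] g := hsm.ae_eq_mk
    rw [reduce hd r x f g hgm hfg, maximal_congr f g x hfg]
    exact main_meas hd r hr x g hgm
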